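/- Let A_c(x) = e^{−x} − e^{−(1+c)x} for x ≥ 0 and c ∈ (0,1]. Then for all 0 ≤ x ≤ y one has |A_c(x) − A_c(y)| ≤ 2c |e^{−x/2} − e^{−y/2}|, and consequently sup_{x≥0} A_c(x) ≤ c·sup_{y≥0} y e^{−y} ≤ c. -/

import Mathlib

open Real intervalIntegral

private lemma le_exp_half (z : ℝ) (hz : 0 ≤ z) : z ≤ Real.exp (z / 2) := by
  have h := Real.add_one_le_exp (z / 2 - 1)
  have h2 : z / 2 ≤ Real.exp (z / 2 - 1) := by linarith
  have : z ≤ 2 * Real.exp (z / 2 - 1) := by linarith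
  calc z ≤ 2 * Real.exp (z / 2 - 1) := this
    _ = (2 / Real.exp 1) * Real.exp (z / 2) := by
        rw [Real.exp_sub]; ring
    _ ≤ 1 * Real.exp (z / 2) := by
        apply mul_le_mul_of_nonneg_right _ (Real.exp_nonneg _)
        rw [div_le_one (Real.exp_pos 1)]
        have := Real.add_one_le_exp (1 : ℝ); linarith
    _ = Real.exp (z / 2) := one_mul _

private lemma deriv_bound (c : ℝ) (hc0 : 0 < c) (hc1 : c ≤ 1) (z : ℝ) (hz : 0 ≤ z) :
    |(-Real.exp (-z) + (1 + c) * Real.exp (-(1 + c) * z))| ≤ c * Real.exp (-z / 2) := by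
  have hsplit : Real.exp (-(1 + c) * z) = Real.exp (-z) * Real.exp (-(c * z)) := by
    rw [← Real.exp_add]; ring_nf
  have hrw : -Real.exp (-z) + (1 + c) * Real.exp (-(1 + c) * z)
      = Real.exp (-z) * ((1 + c) * Real.exp (-(c * z)) - 1) := by
    rw [hsplit]; ring
  rw [hrw, abs_mul, abs_of_nonneg (Real.exp_nonneg _)]
  have hkey : |(1 + c) * Real.exp (-(c * z)) - 1| ≤ c * Real.exp (z / 2) := by
    rw [abs_le]
    have hcz : 0 ≤ c * z := mul_nonneg hc0.le hz
    have he1 : Real.exp (-(c * z)) ≤ 1 := Real.exp_le_one_iff.mpr (by linarith)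
    have he2 : 1 - c * z ≤ Real.exp (-(c * z)) := by
      have := Real.add_one_le_exp (-(c * z)); linarith
    have hez : 1 ≤ Real.exp (z / 2) := Real.one_le_exp_iff.mpr (by linarith)
    constructor
    · -- 1 - (1+c)e^{-cz} ≤ cz ≤ c e^{z/2}
      have h1 : 1 - (1 + c) * Real.exp (-(c * z)) ≤ 1 - Real.exp (-(c * z)) := by
        have := Real.exp_nonneg (-(c * z)); nlinarith
      have h2 : 1 - Real.exp (-(c * z)) ≤ c * z := by linarith
      have h3 : c * z ≤ c * Real.exp (z / 2) :=
        mul_le_mul_of_nonneg_left (le_exp_half z hz) hc0.le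
      linarith
    · have : (1 + c) * Real.exp (-(c * z)) ≤ 1 + c := by nlinarith
      nlinarith
  calc Real.exp (-z) * |(1 + c) * Real.exp (-(c * z)) - 1|
      ≤ Real.exp (-z) * (c * Real.exp (z / 2)) :=
        mul_le_mul_of_nonneg_left hkey (Real.exp_nonneg _)
    _ = c * Real.exp (-z / 2) := by
        have h2 : Real.exp (-z) * Real.exp (z / 2) = Real.exp (-z / 2) := by
          rw [← Real.exp_add]; ring_nf
        calc Real.exp (-z) * (c * Real.exp (z / 2))
            = c * (Real.exp (-z) * Real.exp (z / 2)) := by ring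
          _ = c * Real.exp (-z / 2) := by rw [h2]

theorem stmt9 (c : ℝ) (hc : c ∈ Set.Ioc (0 : ℝ) 1) :
    (∀ x y : ℝ, 0 ≤ x → x ≤ y →
      |(Real.exp (-x) - Real.exp (-(1 + c) * x)) -
        (Real.exp (-y) - Real.exp (-(1 + c) * y))| ≤
        2 * c * |Real.exp (-x / 2) - Real.exp (-y / 2)|) ∧
    (∀ x : ℝ, 0 ≤ x → Real.exp (-x) - Real.exp (-(1 + c) * x) ≤ c) := by
  obtain ⟨hc0, hc1⟩ := hc
  constructor
  · intro x y hx hxy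
    set F : ℝ → ℝ := fun t => Real.exp (-t) - Real.exp (-(1 + c) * t)
    set F' : ℝ → ℝ := fun t => -Real.exp (-t) + (1 + c) * Real.exp (-(1 + c) * t)
    have hF : ∀ z : ℝ, HasDerivAt F (F' z) z := by
      intro z
      have h := ((hasDerivAt_neg z).exp).sub
        (((hasDerivAt_id z).const_mul (-(1 + c))).exp)
      refine h.congr_deriv ?_
      simp only [F', id]
      ring
    have hF'cont : Continuous F' := by
      fun_prop
    have hint : ∫ z in x..y, F' z = F y - F x :=
      intervalIntegral.integral_eq_sub_of_hasDerivAt (fun z _ => hF z)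
        (hF'cont.intervalIntegrable x y)
    -- G for the bound integral
    set G' : ℝ → ℝ := fun t => c * Real.exp (-t / 2)
    have hG : ∀ z : ℝ, HasDerivAt (fun t => -2 * c * Real.exp (-t / 2)) (G' z) z := by
      intro z
      have h := ((((hasDerivAt_id z).neg).div_const 2).exp).const_mul (-2 * c)
      refine h.congr_deriv ?_
      simp only [G', id, Pi.neg_apply]
      ring
    have hG'cont : Continuous G' := by fun_prop
    have hintG : ∫ z in x..y, G' z
        = (-2 * c * Real.exp (-y / 2)) - (-2 * c * Real.exp (-x / 2)) :=
      intervalIntegral.integral_eq_sub_of_hasDerivAt (fun z _ => hG z)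
        (hG'cont.intervalIntegrable x y)
    have hbound : ∀ z ∈ Set.Icc x y, |F' z| ≤ G' z := fun z hz =>
      deriv_bound c hc0 hc1 z (le_trans hx hz.1)
    have habs : |∫ z in x..y, F' z| ≤ ∫ z in x..y, |F' z| :=
      intervalIntegral.abs_integral_le_integral_abs hxy
    have hmono : ∫ z in x..y, |F' z| ≤ ∫ z in x..y, G' z := by
      apply intervalIntegral.integral_mono_on hxy
      · exact (hF'cont.abs.intervalIntegrable x y)
      · exact (hG'cont.intervalIntegrable x y)
      · exact hbound
    have hexp : Real.exp (-y / 2) ≤ Real.exp (-x / 2) :=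
      Real.exp_le_exp.mpr (by linarith)
    have hrhs : |Real.exp (-x / 2) - Real.exp (-y / 2)|
        = Real.exp (-x / 2) - Real.exp (-y / 2) := abs_of_nonneg (by linarith)
    have : |F x - F y| = |∫ z in x..y, F' z| := by
      rw [hint, abs_sub_comm]
    rw [this] at *
    calc |∫ z in x..y, F' z| ≤ ∫ z in x..y, G' z := le_trans habs hmono
      _ = 2 * c * (Real.exp (-x / 2) - Real.exp (-y / 2)) := by rw [hintG]; ring
      _ = 2 * c * |Real.exp (-x / 2) - Real.exp (-y / 2)| := by rw [hrhs]
  · intro x hx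
    have h1 : Real.exp (-(1 + c) * x) = Real.exp (-x) * Real.exp (-(c * x)) := by
      rw [← Real.exp_add]; ring_nf
    have hcx : 0 ≤ c * x := mul_nonneg hc0.le hx
    have h2 : 1 - c * x ≤ Real.exp (-(c * x)) := by
      have := Real.add_one_le_exp (-(c * x)); linarith
    have h3 : Real.exp (-x) * (c * x) ≤ c := by
      have hxe : x * Real.exp (-x) ≤ 1 := by
        rcases eq_or_lt_of_le hx with h | h
        · simp [← h]
        · rw [Real.exp_neg, mul_inv_le_iff₀ (Real.exp_pos x), one_mul]
          have := Real.add_one_le_exp x; linarith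
      calc Real.exp (-x) * (c * x) = c * (x * Real.exp (-x)) := by ring
        _ ≤ c * 1 := mul_le_mul_of_nonneg_left hxe hc0.le
        _ = c := mul_one c
    have h4 : Real.exp (-x) - Real.exp (-(1 + c) * x)
        = Real.exp (-x) * (1 - Real.exp (-(c * x))) := by rw [h1]; ring
    rw [h4]
    calc Real.exp (-x) * (1 - Real.exp (-(c * x)))
        ≤ Real.exp (-x) * (c * x) :=
          mul_le_mul_of_nonneg_left (by linarith) (Real.exp_nonneg _)
      _ ≤ c := h3
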